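/- A reachability game can be encoded as an energy game preserving the winner: given a two-player game graph with n nodes and absorbing target set T, assign weight +1 to nodes in T and weight −1 to all other nodes, and set initial credit c = (n+1)(n+2)/2. Then Max wins the reachability objective from v iff Max wins the energy objective (all partial sums c + Σ_{i≤j} w(vᵢ) ≥ 0) from v, provided that when Max can win the reachability game, Max can reach T within (n+1)(n+2)/2 steps, and once in T the energy never decreases. -/
import Mathlib


open scoped Classical

/-- A play `π` is consistent with Max's strategy `σ`: whenever the current node is Max's,
the next node is the one prescribed by `σ` applied to the play history. -/
def Consistent {V : Type} (V₀ : Set V) (σ : List V → V) (π : ℕ → V) : Prop :=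
  ∀ k, π k ∈ V₀ → π (k + 1) = σ (List.ofFn fun i : Fin (k + 1) => π i)

/-- Max can win objective `Obj` from `v`. -/
def WinsWith {V : Type} (E : V → V → Prop) (V₀ : Set V) (v : V)
    (Obj : (ℕ → V) → Prop) : Prop :=
  ∃ σ : List V → V, (∀ (l : List V) (x : V), E x (σ (l ++ [x]))) ∧
    ∀ π : ℕ → V, π 0 = v → (∀ k, E (π k) (π (k + 1))) → Consistent V₀ σ π → Obj π

/-- Reachability objective: the play visits the target set `T`. -/
def ReachObj {V : Type} (T : Set V) (π : ℕ → V) : Prop := ∃ k, π k ∈ T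

/-- Energy objective with weights `w` and initial credit `c`: all partial sums
`c + Σ_{i ≤ j} w (π i)` are nonnegative. -/
def EnergyObj {V : Type} (w : V → ℤ) (c : ℕ) (π : ℕ → V) : Prop :=
  ∀ j, 0 ≤ (c : ℤ) + ∑ i ∈ Finset.range (j + 1), w (π i)

/-- Encoding reachability as an energy game: with `n = |V|` nodes, absorbing target set `T`,
weight `+1` on `T` and `−1` elsewhere, and initial credit `c = (n+1)(n+2)/2`, Max wins the
reachability objective from `v` iff Max wins the energy objective from `v` — provided that
whenever Max can win the reachability game, Max can reach `T` within `(n+1)(n+2)/2` steps. -/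
theorem reachability_as_energy {V : Type} [Fintype V] (E : V → V → Prop)
    (V₀ : Set V) (T : Set V) (habs : ∀ u ∈ T, ∀ w, E u w → w ∈ T) (v : V)
    (hfast : WinsWith E V₀ v (ReachObj T) →
      WinsWith E V₀ v (fun π =>
        ∃ k ≤ (Fintype.card V + 1) * (Fintype.card V + 2) / 2, π k ∈ T)) :
    WinsWith E V₀ v (ReachObj T) ↔
      WinsWith E V₀ v (EnergyObj (fun u => if u ∈ T then (1 : ℤ) else -1)
        ((Fintype.card V + 1) * (Fintype.card V + 2) / 2)) := by
  set c := (Fintype.card V + 1) * (Fintype.card V + 2) / 2 with hc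
  constructor
  · intro hreach
    obtain ⟨σ, hσE, hσ⟩ := hfast hreach
    refine ⟨σ, hσE, fun π h0 hE hcons => ?_⟩
    obtain ⟨k, hk, hkT⟩ := hσ π h0 hE hcons
    have habs' : ∀ i, k ≤ i → π i ∈ T := by
      intro i hi
      induction i, hi using Nat.le_induction with
      | base => exact hkT
      | succ n hn ih => exact habs _ ih _ (hE n)
    intro j
    have key : ∀ m, -((min m k : ℕ) : ℤ) ≤
        ∑ i ∈ Finset.range m, (if π i ∈ T then (1 : ℤ) else -1) := by
      intro m
      induction m with
      | zero => simp
      | succ m ih =>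
        rw [Finset.sum_range_succ]
        rcases lt_or_ge m k with hm | hm
        · have h1 : min m k = m := min_eq_left hm.le
          have h2 : min (m + 1) k = m + 1 := min_eq_left hm
          rw [h1] at ih
          rw [h2]
          have hw : (-1 : ℤ) ≤ (if π m ∈ T then (1 : ℤ) else -1) := by
            split_ifs <;> norm_num
          push_cast
          linarith
        · have h1 : min m k = k := min_eq_right hm
          have h2 : min (m + 1) k = k := min_eq_right (hm.trans (Nat.le_succ m))
          rw [h1] at ih; rw [h2]
          rw [if_pos (habs' m hm)]
          linarith
    have h1 := key (j + 1)
    have h2 : ((min (j + 1) k : ℕ) : ℤ) ≤ k := by exact_mod_cast min_le_right _ _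
    have h3 : (k : ℤ) ≤ c := by exact_mod_cast hk
    simp only []
    linarith
  · rintro ⟨σ, hσE, hσ⟩
    refine ⟨σ, hσE, fun π h0 hE hcons => ?_⟩
    by_contra hnot
    simp only [ReachObj, not_exists] at hnot
    have hEn := hσ π h0 hE hcons c
    have hsum : ∑ i ∈ Finset.range (c + 1), (if π i ∈ T then (1 : ℤ) else -1)
        = -((c : ℤ) + 1) := by
      rw [Finset.sum_congr rfl (fun i _ => if_neg (hnot i))]
      simp
    simp only [] at hEn
    rw [hsum] at hEn
    linarith
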